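/- Let N have rank 3, let Σ and Σ̃ be finite complete nonsingular fans in N such that Σ̃ refines Σ, and let σ ∈ Σ(3) with G(σ) = {x_1, x_2, x_3}. Let σ̃ be the unique cone in Σ̃ ∖ {0} whose relative interior contains x_1+x_2+x_3. Then: (1) dim σ̃ = 3 if and only if σ = σ̃ ∈ Σ̃; (2) dim σ̃ = 2 if and only if, up to reindexing x_1, x_2, x_3, G(σ̃) = {x_1+x_2, x_3}; and (3) dim σ̃ = 1 if and only if G(σ̃) = {x_1+x_2+x_3}. -/

import Mathlib

noncomputable section

open Finset

/-- The real vector space `N_ℝ` for the lattice `N = ℤ^d`. -/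
abbrev NR (d : ℕ) := Fin d → ℝ

/-- The canonical map from the lattice `N = ℤ^d` to `N_ℝ`. -/
def toNR {d : ℕ} (x : Fin d → ℤ) : NR d := fun i => (x i : ℝ)

/-- The convex cone generated by a set: all finite nonnegative real combinations. -/
def coneOf {d : ℕ} (S : Set (NR d)) : Set (NR d) :=
  { y | ∃ (n : ℕ) (c : Fin n → ℝ) (v : Fin n → NR d),
      (∀ i, 0 ≤ c i) ∧ (∀ i, v i ∈ S) ∧ y = ∑ i, c i • v i }

/-- `τ` is a face of the cone `σ`, cut out by a linear functional nonnegative on `σ`. -/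
def IsFaceOf {d : ℕ} (τ σ : Set (NR d)) : Prop :=
  ∃ u : NR d →ₗ[ℝ] ℝ, (∀ x ∈ σ, 0 ≤ u x) ∧ τ = {x ∈ σ | u x = 0}

/-- A rational polyhedral cone: generated by finitely many lattice points. -/
def IsRationalPolyhedralCone {d : ℕ} (σ : Set (NR d)) : Prop :=
  ∃ S : Finset (Fin d → ℤ), σ = coneOf (toNR '' (↑S : Set (Fin d → ℤ)))

/-- A pointed (strongly convex) cone. -/
def IsPointedCone {d : ℕ} (σ : Set (NR d)) : Prop :=
  ∀ x ∈ σ, -x ∈ σ → x = 0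

/-- A primitive lattice vector. -/
def IsPrimitive {d : ℕ} (x : Fin d → ℤ) : Prop :=
  x ≠ 0 ∧ ∀ (k : ℤ) (y : Fin d → ℤ), x = k • y → k = 1 ∨ k = -1

/-- The dimension of a cone. -/
def coneDim {d : ℕ} (σ : Set (NR d)) : ℕ :=
  Module.finrank ℝ ↥(Submodule.span ℝ σ)

/-- A (finite) fan in `N = ℤ^d`: a finite collection of rational pointed polyhedral
cones, closed under taking faces, such that the intersection of any two cones is a
face of each. -/
structure Fan (d : ℕ) where
  cones : Set (Set (NR d))
  finite : cones.Finite
  rational : ∀ σ ∈ cones, IsRationalPolyhedralCone σ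
  pointed : ∀ σ ∈ cones, IsPointedCone σ
  face_mem : ∀ σ ∈ cones, ∀ τ : Set (NR d), IsFaceOf τ σ → τ ∈ cones
  inter_face : ∀ σ ∈ cones, ∀ τ ∈ cones, IsFaceOf (σ ∩ τ) σ

namespace Fan

variable {d : ℕ}

/-- A complete fan. -/
def IsComplete (F : Fan d) : Prop := ⋃₀ F.cones = Set.univ

/-- A simplicial fan: every cone is generated by linearly independent vectors. -/
def IsSimplicial (F : Fan d) : Prop :=
  ∀ σ ∈ F.cones, ∃ S : Finset (Fin d → ℤ),
    LinearIndependent ℝ (fun v : ↥(toNR '' (↑S : Set (Fin d → ℤ))) => (v : NR d)) ∧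
    σ = coneOf (toNR '' (↑S : Set (Fin d → ℤ)))

/-- A nonsingular fan: every cone is generated by part of a `ℤ`-basis of `N`. -/
def IsNonsingular (F : Fan d) : Prop :=
  ∀ σ ∈ F.cones, ∃ (b : Module.Basis (Fin d) ℤ (Fin d → ℤ)) (t : Set (Fin d)),
    σ = coneOf (toNR '' (⇑b '' t))

/-- `G(Σ)`: the set of primitive generators of the rays of a fan. -/
def genSet (F : Fan d) : Set (Fin d → ℤ) :=
  { x | IsPrimitive x ∧ coneOf {toNR x} ∈ F.cones }

/-- `G(σ) = σ ∩ G(Σ)`. -/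
def coneGens (F : Fan d) (σ : Set (NR d)) : Set (Fin d → ℤ) :=
  { x ∈ F.genSet | toNR x ∈ σ }

/-- A primitive collection of a fan. -/
def IsPrimitiveCollection (F : Fan d) (P : Finset (Fin d → ℤ)) : Prop :=
  P.Nonempty ∧ (↑P : Set (Fin d → ℤ)) ⊆ F.genSet ∧
    coneOf (toNR '' (↑P : Set (Fin d → ℤ))) ∉ F.cones ∧
    ∀ x ∈ P, coneOf (toNR '' ((↑P : Set (Fin d → ℤ)) \ {x})) ∈ F.cones

/-- `IsPrimRel F P Y a`: `P` is a primitive collection of `F` whose primitive relation is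
`∑_{x ∈ P} x = ∑_{y ∈ Y} (a y) • y`, where `Y = G(σ(P))` and `σ(P)` is the unique cone
whose relative interior contains `∑_{x ∈ P} x`, and the coefficients `a y` are positive. -/
def IsPrimRel (F : Fan d) (P Y : Finset (Fin d → ℤ)) (a : (Fin d → ℤ) → ℤ) : Prop :=
  F.IsPrimitiveCollection P ∧
  ∃ σ ∈ F.cones, (↑Y : Set (Fin d → ℤ)) = F.coneGens σ ∧
    toNR (∑ x ∈ P, x) ∈ intrinsicInterior ℝ σ ∧
    (∀ y ∈ Y, 0 < a y) ∧ (∑ x ∈ P, x) = ∑ y ∈ Y, a y • y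

/-- A Fano fan: a finite complete nonsingular fan with `deg P > 0` for every
primitive collection `P` (so its toric variety is a nonsingular toric Fano `d`-fold). -/
def IsFanoFan (F : Fan d) : Prop :=
  F.IsComplete ∧ F.IsNonsingular ∧
    ∀ P Y a, F.IsPrimRel P Y a → ∑ y ∈ Y, a y < (P.card : ℤ)

/-- The collection of cones of the star subdivision of `F` along `(σ, x)`. -/
def starSub (F : Fan d) (σ : Set (NR d)) (x : Fin d → ℤ) : Set (Set (NR d)) :=
  { τ ∈ F.cones | ¬ IsFaceOf σ τ } ∪
  { ρ | ∃ τ ∈ F.cones, IsFaceOf σ τ ∧ ∃ xi ∈ F.coneGens σ,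
      IsFaceOf ρ (coneOf (toNR ''
        (insert x ((F.coneGens τ \ F.coneGens σ) ∪ (F.coneGens σ \ {xi}))))) }

/-- `F'` is the star subdivision of `F` along `(σ, x)`. -/
def IsStarSubdivisionOf (F' F : Fan d) (σ : Set (NR d)) (x : Fin d → ℤ) : Prop :=
  F'.cones = F.starSub σ x

/-- `F'` is an equivariant blow-up of `F`: the star subdivision along a cone `σ` (with at
least two generators) and the sum of the elements of `G(σ)`. -/
def IsBlowupOf (F' F : Fan d) : Prop :=
  ∃ σ ∈ F.cones, ∃ S : Finset (Fin d → ℤ),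
    (↑S : Set (Fin d → ℤ)) = F.coneGens σ ∧ 2 ≤ S.card ∧
    F'.IsStarSubdivisionOf F σ (∑ y ∈ S, y)

/-- One step of F-equivalence: an equivariant blow-up or blow-down between Fano fans. -/
def FStep (F G : Fan d) : Prop :=
  F.IsFanoFan ∧ G.IsFanoFan ∧ (G.IsBlowupOf F ∨ F.IsBlowupOf G)

/-- F-equivalence of Fano fans. -/
def FEquiv : Fan d → Fan d → Prop := Relation.ReflTransGen FStep

/-- A splitting fan: any two distinct primitive collections are disjoint. -/
def IsSplittingFan (F : Fan d) : Prop :=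
  F.IsComplete ∧ F.IsNonsingular ∧
    ∀ P Q, F.IsPrimitiveCollection P → F.IsPrimitiveCollection Q → P ≠ Q →
      ∀ x ∈ P, x ∉ Q

/-- Data of a wall relation: `τ` is a wall (a `(d-1)`-dimensional cone) with
`G(τ) = Z`, `z_d = zd`, `z_{d+1} = zd1` the generators of the two maximal cones
containing `τ`, and `∑_{z ∈ Z} (b z) • z + zd + zd1 = 0`.  The anticanonical degree of
the corresponding invariant curve is `∑_{z ∈ Z} b z + 2`. -/
def IsWallRel (F : Fan d) (τ : Set (NR d)) (Z : Finset (Fin d → ℤ))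
    (zd zd1 : Fin d → ℤ) (b : (Fin d → ℤ) → ℤ) : Prop :=
  τ ∈ F.cones ∧ coneDim τ = d - 1 ∧ (↑Z : Set (Fin d → ℤ)) = F.coneGens τ ∧
    zd ∈ F.genSet ∧ zd1 ∈ F.genSet ∧ zd ≠ zd1 ∧ zd ∉ Z ∧ zd1 ∉ Z ∧
    coneOf (toNR '' (insert zd (↑Z : Set (Fin d → ℤ)))) ∈ F.cones ∧
    coneOf (toNR '' (insert zd1 (↑Z : Set (Fin d → ℤ)))) ∈ F.cones ∧
    (∑ z ∈ Z, b z • z) + zd + zd1 = 0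

end Fan

/-- The fan of a product of projective spaces `P^{a 0} × ⋯ × P^{a (r-1)}`. -/
def IsProdProjFan {d r : ℕ} (F : Fan d) (a : Fin r → ℕ) : Prop :=
  ∃ e : (j : Fin r) → Fin (a j + 1) → (Fin d → ℤ),
    (∀ j, ∑ i, e j i = 0) ∧
    (∃ b : Module.Basis ((j : Fin r) × Fin (a j)) ℤ (Fin d → ℤ),
       ∀ (j : Fin r) (i : Fin (a j)), e j i.castSucc = b ⟨j, i⟩) ∧
    F.cones = { σ | ∃ s : (j : Fin r) → Finset (Fin (a j + 1)),
        (∀ j, s j ≠ Finset.univ) ∧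
        σ = coneOf (toNR '' (⋃ j, (e j) '' (↑(s j) : Set (Fin (a j + 1))))) }

/-- The fan of the projective space `P^d`. -/
def IsProjFan {d : ℕ} (F : Fan d) : Prop := IsProdProjFan F (fun _ : Fin 1 => d)

/-- The lattice points of `N_ℝ`. -/
def latticePts (d : ℕ) : Set (NR d) := Set.range (toNR (d := d))

/-- `F` is, up to a unimodular identification, the product of the fans `F₁` and `F₂`. -/
def IsProductOf {d d₁ d₂ : ℕ} (F : Fan d) (F₁ : Fan d₁) (F₂ : Fan d₂) : Prop :=
  ∃ φ : NR d ≃ₗ[ℝ] NR d₁ × NR d₂,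
    (⇑φ '' latticePts d = (latticePts d₁) ×ˢ (latticePts d₂)) ∧
    F.cones = { σ | ∃ σ₁ ∈ F₁.cones, ∃ σ₂ ∈ F₂.cones, ⇑φ '' σ = σ₁ ×ˢ σ₂ }

/-- `δ` is a nonempty proper face of the polytope `Δ`. -/
def IsProperPolytopeFace {d : ℕ} (δ Δ : Set (NR d)) : Prop :=
  δ.Nonempty ∧ δ ≠ Δ ∧ ∃ (u : NR d →ₗ[ℝ] ℝ) (c : ℝ),
    (∀ x ∈ Δ, u x ≤ c) ∧ δ = {x ∈ Δ | u x = c}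

/-- The collection of cones over the proper faces of the polytope `Conv(V)`
(together with the zero cone). -/
def polytopeFaceFan {d : ℕ} (V : Set (NR d)) : Set (Set (NR d)) :=
  insert ({0} : Set (NR d))
    { σ | ∃ δ : Set (NR d), IsProperPolytopeFace δ (convexHull ℝ V) ∧ σ = coneOf δ }

/-- The four-dimensional del Pezzo fan `V⁴` (up to unimodular equivalence). -/
def IsDelPezzoFan4 (F : Fan 4) : Prop :=
  ∃ b : Module.Basis (Fin 4) ℤ (Fin 4 → ℤ),
    F.cones = polytopeFaceFan (toNR ''
      ((Set.range ⇑b) ∪ (Set.range fun i => -b i) ∪ {(∑ i, b i), -(∑ i, b i)}))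

/-- The four-dimensional pseudo del Pezzo fan `Ṽ⁴` (up to unimodular equivalence). -/
def IsPseudoDelPezzoFan4 (F : Fan 4) : Prop :=
  ∃ b : Module.Basis (Fin 4) ℤ (Fin 4 → ℤ),
    F.cones = polytopeFaceFan (toNR ''
      ((Set.range ⇑b) ∪ (Set.range fun i => -b i) ∪ {∑ i, b i}))

/-- An equivariant blow-up of a 3-dimensional fan at an invariant point: star subdivision
along a 3-dimensional cone and the sum of its three generators. -/
def PointBlowup3 (F' F : Fan 3) : Prop :=
  ∃ σ ∈ F.cones, ∃ S : Finset (Fin 3 → ℤ),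
    (↑S : Set (Fin 3 → ℤ)) = F.coneGens σ ∧ S.card = 3 ∧
    F'.IsStarSubdivisionOf F σ (∑ y ∈ S, y)

/-- An equivariant blow-up of a 3-dimensional fan along an invariant curve: star
subdivision along a 2-dimensional cone and the sum of its two generators. -/
def CurveBlowup3 (F' F : Fan 3) : Prop :=
  ∃ σ ∈ F.cones, ∃ S : Finset (Fin 3 → ℤ),
    (↑S : Set (Fin 3 → ℤ)) = F.coneGens σ ∧ S.card = 2 ∧
    F'.IsStarSubdivisionOf F σ (∑ y ∈ S, y)

/-! ### Auxiliary lemmas -/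

section Aux

open Set

lemma toNR_add {d : ℕ} (x y : Fin d → ℤ) : toNR (x + y) = toNR x + toNR y := by
  funext i; simp [toNR]

lemma toNR_zero {d : ℕ} : toNR (0 : Fin d → ℤ) = 0 := by funext i; simp [toNR]

lemma toNR_zsmul {d : ℕ} (k : ℤ) (x : Fin d → ℤ) :
    toNR (k • x) = (k : ℝ) • toNR x := by
  funext i; simp [toNR]

lemma toNR_inj {d : ℕ} {x y : Fin d → ℤ} (h : toNR x = toNR y) : x = y := by
  funext i
  have h2 := congrFun h i
  simpa [toNR] using h2

lemma toNR_sum {d : ℕ} {ι : Type*} (s : Finset ι) (f : ι → Fin d → ℤ) :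
    toNR (∑ i ∈ s, f i) = ∑ i ∈ s, toNR (f i) := by
  classical
  induction s using Finset.induction with
  | empty => simp [toNR_zero]
  | insert _ _ h ih => rw [Finset.sum_insert h, toNR_add, ih, Finset.sum_insert h]

lemma zero_mem_coneOf {d : ℕ} (S : Set (NR d)) : (0 : NR d) ∈ coneOf S :=
  ⟨0, Fin.elim0, Fin.elim0, fun i => i.elim0, fun i => i.elim0, by simp⟩

lemma mem_coneOf_of_mem {d : ℕ} {S : Set (NR d)} {w : NR d} (hw : w ∈ S) :
    w ∈ coneOf S :=
  ⟨1, fun _ => 1, fun _ => w, fun _ => zero_le_one, fun _ => hw, by simp⟩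

lemma smul_mem_coneOf {d : ℕ} {S : Set (NR d)} {z : NR d} (hz : z ∈ coneOf S)
    {r : ℝ} (hr : 0 ≤ r) : r • z ∈ coneOf S := by
  obtain ⟨n, c, v, hc, hv, rfl⟩ := hz
  exact ⟨n, fun i => r * c i, v, fun i => mul_nonneg hr (hc i), hv, by
    rw [Finset.smul_sum]; exact Finset.sum_congr rfl fun i _ => (mul_smul r (c i) (v i)).symm⟩

lemma mem_coneOf_singleton {d : ℕ} {w z : NR d} :
    z ∈ coneOf {w} ↔ ∃ r : ℝ, 0 ≤ r ∧ z = r • w := by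
  constructor
  · rintro ⟨n, c, v, hc, hv, rfl⟩
    refine ⟨∑ i, c i, Finset.sum_nonneg fun i _ => hc i, ?_⟩
    rw [Finset.sum_smul]
    exact Finset.sum_congr rfl fun i _ => by rw [hv i]
  · rintro ⟨r, hr, rfl⟩
    exact smul_mem_coneOf (mem_coneOf_of_mem (Set.mem_singleton w)) hr

lemma coneOf_singleton_subset {d : ℕ} {S : Set (NR d)} {w : NR d} (hw : w ∈ coneOf S) :
    coneOf {w} ⊆ coneOf S := by
  intro z hz
  obtain ⟨r, hr, rfl⟩ := mem_coneOf_singleton.1 hz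
  exact smul_mem_coneOf hw hr

end Aux
section Aux2

open Set

variable {B : Module.Basis (Fin 3) ℝ (NR 3)}

lemma repr_coneOf_apply {n : ℕ} {c : Fin n → ℝ} {v : Fin n → NR 3} (i : Fin 3) :
    B.repr (∑ k, c k • v k) i = ∑ k, c k * B.repr (v k) i := by
  rw [map_sum]
  rw [Finsupp.finset_sum_apply]
  exact Finset.sum_congr rfl fun k _ => by rw [map_smul, Finsupp.smul_apply, smul_eq_mul]

lemma mem_coneOf_basis (t : Set (Fin 3)) (z : NR 3) :
    z ∈ coneOf (⇑B '' t) ↔ (∀ i, 0 ≤ B.repr z i) ∧ ∀ i ∉ t, B.repr z i = 0 := by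
  classical
  constructor
  · rintro ⟨n, c, v, hc, hv, rfl⟩
    constructor
    · intro i
      rw [repr_coneOf_apply]
      refine Finset.sum_nonneg fun k _ => ?_
      obtain ⟨j, hj, hjv⟩ := hv k
      rw [← hjv, B.repr_self, Finsupp.single_apply]
      split <;> simp [hc k]
    · intro i hi
      rw [repr_coneOf_apply]
      refine Finset.sum_eq_zero fun k _ => ?_
      obtain ⟨j, hj, hjv⟩ := hv k
      rw [← hjv, B.repr_self, Finsupp.single_apply]
      have : j ≠ i := fun h => hi (h ▸ hj)
      simp [this]
  · rintro ⟨h1, h2⟩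
    rcases t.eq_empty_or_nonempty with rfl | ⟨i₀, hi₀⟩
    · have hz : z = 0 := by
        have hall : ∀ i, B.repr z i = 0 := fun i => h2 i (by simp)
        have hz0 : B.repr z = B.repr 0 := by
          rw [map_zero]; exact Finsupp.ext hall
        exact B.repr.injective hz0
      simpa [hz] using zero_mem_coneOf (⇑B '' (∅ : Set (Fin 3)))
    · refine ⟨3, fun i => if i ∈ t then B.repr z i else 0,
        fun i => if i ∈ t then B i else B i₀, fun i => ?_, fun i => ?_, ?_⟩
      · by_cases hi : i ∈ t <;> simp [hi, h1 i]
      · by_cases hi : i ∈ t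
        · simp only [hi, if_true]; exact ⟨i, hi, rfl⟩
        · simp only [hi, if_false]; exact ⟨i₀, hi₀, rfl⟩
      · have key : ∀ i : Fin 3, (if i ∈ t then B.repr z i else 0) • (if i ∈ t then B i else B i₀)
            = B.repr z i • B i := by
          intro i
          by_cases hi : i ∈ t
          · simp [hi]
          · simp [hi, h2 i hi]
        calc z = ∑ i : Fin 3, B.repr z i • B i := (B.sum_repr z).symm
        _ = _ := (Finset.sum_congr rfl fun i _ => (key i).symm)

end Aux2
section Aux3

open Set Submodule

lemma toNR_mem_span (b : Module.Basis (Fin 3) ℤ (Fin 3 → ℤ)) (v : Fin 3 → ℤ) :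
    toNR v ∈ Submodule.span ℝ (Set.range (toNR ∘ ⇑b)) := by
  have hv : v = ∑ i, b.repr v i • b i := (b.sum_repr v).symm
  rw [hv, toNR_sum]
  refine Submodule.sum_mem _ fun i _ => ?_
  rw [toNR_zsmul]
  exact Submodule.smul_mem _ _ (Submodule.subset_span ⟨i, rfl⟩)

lemma top_le_span_toNR (b : Module.Basis (Fin 3) ℤ (Fin 3 → ℤ)) :
    ⊤ ≤ Submodule.span ℝ (Set.range (toNR ∘ ⇑b)) := by
  intro z _
  have hz : z = ∑ j, z j • toNR (Pi.single j 1) := by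
    funext i
    simp only [Finset.sum_apply, Pi.smul_apply, toNR, smul_eq_mul]
    rw [Finset.sum_eq_single i]
    · simp
    · intro j _ hj
      simp [Pi.single_apply, Ne.symm hj]
    · simp
  rw [hz]
  exact Submodule.sum_mem _ fun j _ =>
    Submodule.smul_mem _ _ (toNR_mem_span b (Pi.single j 1))

/-- The `ℝ`-basis of `NR 3` induced by a `ℤ`-basis of the lattice. -/
def realBasis (b : Module.Basis (Fin 3) ℤ (Fin 3 → ℤ)) : Module.Basis (Fin 3) ℝ (NR 3) :=
  basisOfTopLeSpanOfCardEqFinrank (toNR ∘ ⇑b) (top_le_span_toNR b)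
    (by simp [Module.finrank_pi])

lemma realBasis_apply (b : Module.Basis (Fin 3) ℤ (Fin 3 → ℤ)) (i : Fin 3) :
    realBasis b i = toNR (b i) := by
  rw [realBasis, coe_basisOfTopLeSpanOfCardEqFinrank]; rfl

lemma realBasis_repr (b : Module.Basis (Fin 3) ℤ (Fin 3 → ℤ)) (v : Fin 3 → ℤ) (i : Fin 3) :
    (realBasis b).repr (toNR v) i = ((b.repr v i : ℤ) : ℝ) := by
  have hv : toNR v = ∑ j, ((b.repr v j : ℤ) : ℝ) • realBasis b j := by
    conv_lhs => rw [(b.sum_repr v).symm]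
    rw [toNR_sum]
    exact Finset.sum_congr rfl fun j _ => by rw [toNR_zsmul, realBasis_apply]
  rw [hv]
  rw [Module.Basis.repr_sum_self]

lemma basis_isPrimitive (b : Module.Basis (Fin 3) ℤ (Fin 3 → ℤ)) (i : Fin 3) :
    IsPrimitive (b i) := by
  refine ⟨b.ne_zero i, fun k y hky => ?_⟩
  have h1 : b.repr (b i) i = k * b.repr y i := by
    rw [hky, map_smul]; simp
  rw [b.repr_self, Finsupp.single_apply] at h1
  simp only [if_pos rfl] at h1
  have : IsUnit k := IsUnit.of_mul_eq_one (b.repr y i) h1.symm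
  exact Int.isUnit_iff.1 this

lemma span_coneOf_basis (B : Module.Basis (Fin 3) ℝ (NR 3)) (t : Set (Fin 3)) :
    Submodule.span ℝ (coneOf (⇑B '' t)) = Submodule.span ℝ (⇑B '' t) := by
  refine le_antisymm (Submodule.span_le.2 fun z hz => ?_)
    (Submodule.span_mono fun w hw => mem_coneOf_of_mem hw)
  obtain ⟨n, c, v, hc, hv, rfl⟩ := hz
  exact Submodule.sum_mem _ fun k _ =>
    Submodule.smul_mem _ _ (Submodule.subset_span (hv k))

lemma coneDim_coneOf_basis (B : Module.Basis (Fin 3) ℝ (NR 3)) (t : Set (Fin 3)) :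
    coneDim (coneOf (⇑B '' t)) = t.ncard := by
  classical
  rw [coneDim, span_coneOf_basis]
  have li2 : LinearIndependent ℝ (⇑B ∘ ((↑) : t → Fin 3)) :=
    B.linearIndependent.comp _ Subtype.coe_injective
  have hr : Set.range (⇑B ∘ ((↑) : t → Fin 3)) = ⇑B '' t := by
    rw [Set.range_comp, Subtype.range_coe]
  have li3 : LinearIndependent ℝ ((↑) : (⇑B '' t) → NR 3) := by
    rw [← hr]; exact (linearIndepOn_id_range_iff li2.injective).mpr li2
  haveI : Fintype (⇑B '' t) := Fintype.ofFinite _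
  rw [finrank_span_set_eq_card li3]
  rw [← Set.ncard_eq_toFinset_card']
  exact Set.ncard_image_of_injective t B.injective

end Aux3
section Aux4

open Set

lemma realBasis_coe (b : Module.Basis (Fin 3) ℤ (Fin 3 → ℤ)) :
    ⇑(realBasis b) = toNR ∘ ⇑b := funext fun i => realBasis_apply b i

lemma image_toNR_basis (b : Module.Basis (Fin 3) ℤ (Fin 3 → ℤ)) (t : Set (Fin 3)) :
    toNR '' (⇑b '' t) = ⇑(realBasis b) '' t := by
  rw [realBasis_coe, Set.image_comp]

lemma exists_sub_mem_of_intrinsicInterior {σ : Set (NR 3)} {z w : NR 3}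
    (h0 : (0 : NR 3) ∈ σ) (hw : w ∈ σ) (hz : z ∈ intrinsicInterior ℝ σ) :
    ∃ ε : ℝ, 0 < ε ∧ z - ε • w ∈ σ := by
  obtain ⟨p, hp, hpz⟩ := hz
  have hzmem : z ∈ affineSpan ℝ σ := hpz ▸ p.2
  have hwd : w ∈ (affineSpan ℝ σ).direction := by
    have := AffineSubspace.vsub_mem_direction (subset_affineSpan ℝ σ hw)
      (subset_affineSpan ℝ σ h0)
    simpa using this
  have hmemf : ∀ ε : ℝ, z - ε • w ∈ affineSpan ℝ σ := by
    intro ε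
    have heq : z - ε • w = ((-ε) • w) +ᵥ z := by
      rw [vadd_eq_add, neg_smul, ← sub_eq_neg_add]
    rw [heq]
    exact AffineSubspace.vadd_mem_of_mem_direction (Submodule.smul_mem _ _ hwd) hzmem
  set f : ℝ → affineSpan ℝ σ := fun ε => ⟨z - ε • w, hmemf ε⟩ with hf_def
  have hf : Continuous f := by
    refine Continuous.subtype_mk ?_ _
    exact continuous_const.sub (continuous_id.smul continuous_const)
  have hopen : IsOpen (f ⁻¹' interior (((↑) : affineSpan ℝ σ → NR 3) ⁻¹' σ)) :=
    isOpen_interior.preimage hf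
  have h0f : (0 : ℝ) ∈ f ⁻¹' interior (((↑) : affineSpan ℝ σ → NR 3) ⁻¹' σ) := by
    have hf0 : f 0 = p := Subtype.ext (by simp [hf_def, ← hpz])
    simp only [Set.mem_preimage, hf0]
    exact hp
  obtain ⟨ε, hε, hball⟩ := Metric.isOpen_iff.1 hopen 0 h0f
  have hmem : f (ε / 2) ∈ interior (((↑) : affineSpan ℝ σ → NR 3) ⁻¹' σ) := by
    apply hball
    rw [Metric.mem_ball, Real.dist_eq, sub_zero, abs_of_pos (by positivity)]
    linarith
  have : f (ε / 2) ∈ (((↑) : affineSpan ℝ σ → NR 3) ⁻¹' σ) := interior_subset hmem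
  exact ⟨ε / 2, by positivity, this⟩

lemma repr_pos_of_intrinsicInterior (B : Module.Basis (Fin 3) ℝ (NR 3)) (t : Set (Fin 3))
    {z : NR 3} (hz : z ∈ intrinsicInterior ℝ (coneOf (⇑B '' t))) :
    ∀ i ∈ t, 0 < B.repr z i := by
  intro i hi
  have hBi : B i ∈ coneOf (⇑B '' t) := mem_coneOf_of_mem ⟨i, hi, rfl⟩
  obtain ⟨ε, hε, hmem⟩ := exists_sub_mem_of_intrinsicInterior
    (zero_mem_coneOf _) hBi hz
  have h1 := ((mem_coneOf_basis t _).1 hmem).1 i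
  rw [map_sub, map_smul, Finsupp.sub_apply, Finsupp.smul_apply, B.repr_self,
    Finsupp.single_apply, if_pos rfl, smul_eq_mul, mul_one] at h1
  linarith

end Aux4
section Aux5

open Set

lemma isFaceOf_ray (B : Module.Basis (Fin 3) ℝ (NR 3)) (t : Set (Fin 3)) {i : Fin 3} (hi : i ∈ t) :
    IsFaceOf (coneOf {B i}) (coneOf (⇑B '' t)) := by
  classical
  show ∃ u : NR 3 →ₗ[ℝ] ℝ, (∀ x ∈ coneOf (⇑B '' t), 0 ≤ u x) ∧
    coneOf {B i} = {x ∈ coneOf (⇑B '' t) | u x = 0}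
  refine ⟨(∑ j ∈ Finset.univ.filter (fun j => j ∈ t ∧ j ≠ i), B.coord j), ?_, ?_⟩
  · intro z hz
    obtain ⟨hnn, -⟩ := (mem_coneOf_basis t z).1 hz
    simp only [LinearMap.coe_sum, Finset.sum_apply]
    exact Finset.sum_nonneg fun j _ => by simpa [Module.Basis.coord_apply] using hnn j
  · ext z
    constructor
    · intro hz
      obtain ⟨r, hr, rfl⟩ := mem_coneOf_singleton.1 hz
      refine ⟨smul_mem_coneOf (mem_coneOf_of_mem (⟨i, hi, rfl⟩ : B i ∈ ⇑B '' t)) hr, ?_⟩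
      simp only [LinearMap.coe_sum, Finset.sum_apply]
      refine Finset.sum_eq_zero fun j hj => ?_
      obtain ⟨-, hji⟩ := Finset.mem_filter.1 hj
      simp [Module.Basis.coord_apply, Finsupp.single_apply, Ne.symm hji.2]
    · rintro ⟨hz, hu⟩
      obtain ⟨hnn, hsupp⟩ := (mem_coneOf_basis t z).1 hz
      simp only [LinearMap.coe_sum, Finset.sum_apply] at hu
      have hz0 : ∀ j, j ≠ i → B.repr z j = 0 := by
        intro j hji
        by_cases hjt : j ∈ t
        · have := (Finset.sum_eq_zero_iff_of_nonneg (fun k hk => by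
            simpa [Module.Basis.coord_apply] using hnn k)).1 hu j
            (Finset.mem_filter.2 ⟨Finset.mem_univ j, hjt, hji⟩)
          simpa [Module.Basis.coord_apply] using this
        · exact hsupp j hjt
      have hzi : z = B.repr z i • B i := by
        conv_lhs => rw [← B.sum_repr z]
        rw [Finset.sum_eq_single i]
        · intro j _ hj; rw [hz0 j hj, zero_smul]
        · intro h; exact absurd (Finset.mem_univ i) h
      exact mem_coneOf_singleton.2 ⟨B.repr z i, hnn i, hzi⟩

lemma coneGens_of_basis (F : Fan 3) (σ : Set (NR 3)) (hσ : σ ∈ F.cones)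
    (b : Module.Basis (Fin 3) ℤ (Fin 3 → ℤ)) (t : Set (Fin 3))
    (hσeq : σ = coneOf (toNR '' (⇑b '' t))) :
    F.coneGens σ = ⇑b '' t := by
  have hσB : σ = coneOf (⇑(realBasis b) '' t) := by rw [hσeq, image_toNR_basis]
  set B := realBasis b with hB
  ext y
  constructor
  · rintro ⟨⟨hyprim, hray⟩, hymem⟩
    have hRσ : coneOf {toNR y} ⊆ σ := by
      rw [hσB]; rw [hσB] at hymem; exact coneOf_singleton_subset hymem
    obtain ⟨u, hu, hface⟩ := F.inter_face σ hσ _ hray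
    have hRint : σ ∩ coneOf {toNR y} = coneOf {toNR y} :=
      Set.inter_eq_self_of_subset_right hRσ
    have hyu : u (toNR y) = 0 := by
      have : toNR y ∈ σ ∩ coneOf {toNR y} := ⟨hymem, mem_coneOf_of_mem rfl⟩
      rw [hface] at this
      exact this.2
    obtain ⟨hnn, hsupp⟩ := (mem_coneOf_basis t (toNR y)).1 (hσB ▸ hymem)
    have hudec : u (toNR y) = ∑ j, B.repr (toNR y) j * u (B j) := by
      conv_lhs => rw [← B.sum_repr (toNR y)]
      rw [map_sum]
      exact Finset.sum_congr rfl fun j _ => by rw [map_smul, smul_eq_mul]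
    have hterm : ∀ j, j ∈ t → 0 ≤ u (B j) := fun j hj =>
      hu _ (hσB ▸ mem_coneOf_of_mem ⟨j, hj, rfl⟩)
    have htz : ∀ j ∈ t, B.repr (toNR y) j * u (B j) = 0 := by
      have hsum : ∑ j, B.repr (toNR y) j * u (B j) = 0 := by rw [← hudec, hyu]
      have hnn' : ∀ j ∈ Finset.univ, 0 ≤ B.repr (toNR y) j * u (B j) := by
        intro j _
        by_cases hjt : j ∈ t
        · exact mul_nonneg (hnn j) (hterm j hjt)
        · rw [hsupp j hjt, zero_mul]
      intro j hj
      exact (Finset.sum_eq_zero_iff_of_nonneg hnn').1 hsum j (Finset.mem_univ j)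
    -- find the index j₀ with nonzero coordinate
    have hynz : toNR y ≠ 0 := fun h => hyprim.1 (toNR_inj (h.trans toNR_zero.symm))
    have hex : ∃ j₀ ∈ t, B.repr (toNR y) j₀ ≠ 0 := by
      by_contra hcon
      push_neg at hcon
      apply hynz
      have hall : ∀ j, B.repr (toNR y) j = 0 := by
        intro j
        by_cases hjt : j ∈ t
        · exact hcon j hjt
        · exact hsupp j hjt
      rw [← B.sum_repr (toNR y)]
      exact Finset.sum_eq_zero fun j _ => by rw [hall j, zero_smul]
    obtain ⟨j₀, hj₀t, hj₀⟩ := hex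
    have huj₀ : u (B j₀) = 0 := by
      rcases mul_eq_zero.1 (htz j₀ hj₀t) with h | h
      · exact absurd h hj₀
      · exact h
    have hBj₀R : B j₀ ∈ coneOf {toNR y} := by
      have : B j₀ ∈ σ ∩ coneOf {toNR y} := by
        rw [hface]
        exact ⟨hσB ▸ mem_coneOf_of_mem ⟨j₀, hj₀t, rfl⟩, huj₀⟩
      exact this.2
    obtain ⟨μ, hμ, hμeq⟩ := mem_coneOf_singleton.1 hBj₀R
    have hμpos : 0 < μ := by
      rcases hμ.lt_or_eq with h | h
      · exact h
      · exfalso; apply B.ne_zero j₀; rw [hμeq, ← h, zero_smul]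
    have hyeq : toNR y = μ⁻¹ • B j₀ := by
      rw [hμeq, smul_smul, inv_mul_cancel₀ hμpos.ne', one_smul]
    -- coordinates of y
    have hreprj : ∀ j, B.repr (toNR y) j = if j₀ = j then μ⁻¹ else 0 := by
      intro j
      rw [hyeq, map_smul, Finsupp.smul_apply, B.repr_self, Finsupp.single_apply,
        smul_eq_mul]
      split <;> simp
    have hint : ∀ j, ((b.repr y j : ℤ) : ℝ) = if j₀ = j then μ⁻¹ else 0 := by
      intro j
      have h' := hreprj j
      rw [hB] at h'
      rw [← realBasis_repr b y j]
      exact h'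
    have hz' : ∀ j, j ≠ j₀ → b.repr y j = 0 := by
      intro j hj
      have := hint j
      rw [if_neg (Ne.symm hj)] at this
      exact_mod_cast this
    have hydec : y = b.repr y j₀ • b j₀ := by
      conv_lhs => rw [← b.sum_repr y]
      rw [Finset.sum_eq_single j₀]
      · intro j _ hj; rw [hz' j hj, zero_smul]
      · intro h; exact absurd (Finset.mem_univ j₀) h
    rcases hyprim.2 _ _ hydec with h1 | h1
    · rw [hydec, h1, one_smul]; exact ⟨j₀, hj₀t, rfl⟩
    · exfalso
      have := hint j₀
      rw [if_pos rfl, h1] at this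
      have hμinv : (0:ℝ) < μ⁻¹ := by positivity
      rw [← this] at hμinv
      norm_num at hμinv
  · rintro ⟨j, hjt, rfl⟩
    refine ⟨⟨basis_isPrimitive b j, ?_⟩, hσeq ▸ mem_coneOf_of_mem ⟨b j, ⟨j, hjt, rfl⟩, rfl⟩⟩
    have : coneOf {toNR (b j)} = coneOf {B j} := by rw [realBasis_apply]
    rw [this]
    exact F.face_mem σ hσ _ (hσB ▸ isFaceOf_ray B t hjt)
end Aux5
section Aux6

open Set

lemma cone_eq_of_interior_meet (F : Fan 3) {σ σ' : Set (NR 3)}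
    (hσ : σ ∈ F.cones) (hσ' : σ' ∈ F.cones) (B : Module.Basis (Fin 3) ℝ (NR 3))
    (hσeq : σ = coneOf (⇑B '' Set.univ)) {z : NR 3}
    (hz : z ∈ σ) (hz' : z ∈ σ') (hzrep : ∀ i, 0 < B.repr z i) : σ' = σ := by
  have hgen : ∀ i, B i ∈ σ := fun i =>
    hσeq ▸ mem_coneOf_of_mem ⟨i, Set.mem_univ i, rfl⟩
  have key : ∀ u : NR 3 →ₗ[ℝ] ℝ, (∀ w ∈ σ, 0 ≤ u w) → u z = 0 → ∀ i, u (B i) = 0 := by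
    intro u hu huz
    have hudec : u z = ∑ j, B.repr z j * u (B j) := by
      conv_lhs => rw [← B.sum_repr z]
      rw [map_sum]
      exact Finset.sum_congr rfl fun j _ => by rw [map_smul, smul_eq_mul]
    have hnn : ∀ j ∈ Finset.univ, 0 ≤ B.repr z j * u (B j) := fun j _ =>
      mul_nonneg (hzrep j).le (hu _ (hgen j))
    have hzero : ∀ j ∈ Finset.univ, B.repr z j * u (B j) = 0 :=
      (Finset.sum_eq_zero_iff_of_nonneg hnn).1 (by rw [← hudec, huz])
    intro i
    rcases mul_eq_zero.1 (hzero i (Finset.mem_univ i)) with h | h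
    · exact absurd h (hzrep i).ne'
    · exact h
  -- first: σ ⊆ σ'
  obtain ⟨u, hu, hface⟩ := F.inter_face σ hσ σ' hσ'
  have hu0 : ∀ i, u (B i) = 0 := by
    refine key u hu ?_
    have : z ∈ σ ∩ σ' := ⟨hz, hz'⟩
    rw [hface] at this
    exact this.2
  have huzero : u = 0 := B.ext fun i => by rw [hu0 i]; rfl
  have hσsub : σ ⊆ σ' := by
    intro w hw
    have : w ∈ σ ∩ σ' := by
      rw [hface]
      exact ⟨hw, by rw [huzero]; rfl⟩
    exact this.2
  -- second: σ' ⊆ σ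
  obtain ⟨v, hv, hface'⟩ := F.inter_face σ' hσ' σ hσ
  have hv0 : ∀ i, v (B i) = 0 := by
    intro i
    have : B i ∈ σ' ∩ σ := ⟨hσsub (hgen i), hgen i⟩
    rw [hface'] at this
    exact this.2
  have hvzero : v = 0 := B.ext fun i => by rw [hv0 i]; rfl
  refine Set.Subset.antisymm ?_ hσsub
  intro w hw
  have : w ∈ σ' ∩ σ := by
    rw [hface']
    exact ⟨hw, by rw [hvzero]; rfl⟩
  exact this.2

lemma exists_adapted_basis {F : Fan 3} {σ : Set (NR 3)} (hσ : σ ∈ F.cones)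
    (hFn : F.IsNonsingular) {x₁ x₂ x₃ : Fin 3 → ℤ}
    (h12 : x₁ ≠ x₂) (h13 : x₁ ≠ x₃) (h23 : x₂ ≠ x₃)
    (hgens : F.coneGens σ = {x₁, x₂, x₃}) :
    ∃ X : Module.Basis (Fin 3) ℤ (Fin 3 → ℤ), X 0 = x₁ ∧ X 1 = x₂ ∧ X 2 = x₃ ∧
      σ = coneOf (toNR '' ({x₁, x₂, x₃} : Set (Fin 3 → ℤ))) := by
  obtain ⟨b, t, hbt⟩ := hFn σ hσ
  have himg : ⇑b '' t = {x₁, x₂, x₃} := by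
    rw [← coneGens_of_basis F σ hσ b t hbt, hgens]
  obtain ⟨j₁, hj₁t, hbj₁⟩ : x₁ ∈ ⇑b '' t := by rw [himg]; exact Or.inl rfl
  obtain ⟨j₂, hj₂t, hbj₂⟩ : x₂ ∈ ⇑b '' t := by rw [himg]; right; exact Or.inl rfl
  obtain ⟨j₃, hj₃t, hbj₃⟩ : x₃ ∈ ⇑b '' t := by rw [himg]; right; right; exact rfl
  set e : Fin 3 → Fin 3 := ![j₁, j₂, j₃] with he
  have hbe : ∀ a : Fin 3, b (e a) = ![x₁, x₂, x₃] a := by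
    intro a
    fin_cases a <;> simpa [he] using ‹_›
  have hxs_ne : ∀ a a' : Fin 3, a ≠ a' → ![x₁, x₂, x₃] a ≠ ![x₁, x₂, x₃] a' := by
    intro a a' haa
    fin_cases a <;> fin_cases a' <;>
      first
        | exact absurd rfl haa
        | simpa using h12
        | simpa using h13
        | simpa using h23
        | simpa using h12.symm
        | simpa using h13.symm
        | simpa using h23.symm
  have hinj : Function.Injective e := by
    intro a a' h
    by_contra haa
    exact hxs_ne a a' haa (by rw [← hbe a, ← hbe a', h])
  have hbij : Function.Bijective e := Finite.injective_iff_bijective.1 hinj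
  set eq : Fin 3 ≃ Fin 3 := Equiv.ofBijective e hbij with heq
  refine ⟨b.reindex eq.symm, ?_, ?_, ?_, ?_⟩
  · rw [Module.Basis.reindex_apply, Equiv.symm_symm]
    exact hbe 0
  · rw [Module.Basis.reindex_apply, Equiv.symm_symm]
    exact hbe 1
  · rw [Module.Basis.reindex_apply, Equiv.symm_symm]
    exact hbe 2
  · rw [hbt, himg]

end Aux6
/-- Classification of the cone `σ̃` of a refining fan whose relative
interior contains `x₁ + x₂ + x₃`, for a maximal cone `σ` with `G(σ) = {x₁, x₂, x₃}`. -/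
theorem refining_cone_of_maximal_cone (F Ft : Fan 3)
    (hFc : F.IsComplete) (hFn : F.IsNonsingular)
    (hFtc : Ft.IsComplete) (hFtn : Ft.IsNonsingular)
    (href : ∀ τ ∈ Ft.cones, ∃ σ ∈ F.cones, τ ⊆ σ)
    (σ : Set (NR 3)) (hσ : σ ∈ F.cones) (hσ3 : coneDim σ = 3)
    (x₁ x₂ x₃ : Fin 3 → ℤ) (h12 : x₁ ≠ x₂) (h13 : x₁ ≠ x₃) (h23 : x₂ ≠ x₃)
    (hgens : F.coneGens σ = {x₁, x₂, x₃})
    (σt : Set (NR 3)) (hσt : σt ∈ Ft.cones)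
    (hrel : toNR (x₁ + x₂ + x₃) ∈ intrinsicInterior ℝ σt) :
    (coneDim σt = 3 ↔ σt = σ) ∧
    (coneDim σt = 2 ↔ (Ft.coneGens σt = {x₁ + x₂, x₃} ∨ Ft.coneGens σt = {x₁ + x₃, x₂} ∨
        Ft.coneGens σt = {x₂ + x₃, x₁})) ∧
    (coneDim σt = 1 ↔ Ft.coneGens σt = {x₁ + x₂ + x₃}) := by
  classical
  obtain ⟨X, hX1, hX2, hX3, hσX⟩ := exists_adapted_basis hσ hFn h12 h13 h23 hgens
  set BX := realBasis X with hBX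
  have hXset : (⇑X '' Set.univ : Set (Fin 3 → ℤ)) = {x₁, x₂, x₃} := by
    ext v
    simp only [Set.image_univ, Set.mem_range, Set.mem_insert_iff, Set.mem_singleton_iff]
    constructor
    · rintro ⟨a, rfl⟩
      fin_cases a
      · exact Or.inl hX1
      · exact Or.inr (Or.inl hX2)
      · exact Or.inr (Or.inr hX3)
    · rintro (rfl | rfl | rfl)
      exacts [⟨0, hX1⟩, ⟨1, hX2⟩, ⟨2, hX3⟩]
  have hσXB : σ = coneOf (⇑BX '' Set.univ) := by
    rw [hσX, ← hXset, image_toNR_basis]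
  set z : NR 3 := toNR (x₁ + x₂ + x₃) with hz_def
  have hsum_eq : x₁ + x₂ + x₃ = X 0 + X 1 + X 2 := by rw [hX1, hX2, hX3]
  have hXsum : ∀ j, X.repr (x₁ + x₂ + x₃) j = 1 := by
    intro j
    rw [hsum_eq, map_add, map_add, X.repr_self, X.repr_self, X.repr_self]
    fin_cases j <;> simp [Finsupp.single_apply]
  have hzrepr : ∀ j, BX.repr z j = 1 := by
    intro j
    rw [hz_def, hBX, realBasis_repr, hXsum j, Int.cast_one]
  have hzσ : z ∈ σ := by
    rw [hσXB]
    exact (mem_coneOf_basis _ _).2 ⟨fun i => by rw [hzrepr]; norm_num,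
      fun i hi => absurd (Set.mem_univ i) hi⟩
  have hzσt : z ∈ σt := intrinsicInterior_subset hrel
  -- `σt ⊆ σ`
  obtain ⟨σ', hσ', hsub⟩ := href σt hσt
  have hσ'σ : σ' = σ := cone_eq_of_interior_meet F hσ hσ' BX hσXB hzσ (hsub hzσt)
    (fun i => by rw [hzrepr]; norm_num)
  have hσtσ : σt ⊆ σ := by rw [← hσ'σ]; exact hsub
  -- the nonsingular structure of `σt`
  obtain ⟨c, s, hcs⟩ := hFtn σt hσt
  set BC := realBasis c with hBC
  have hσtB : σt = coneOf (⇑BC '' s) := by rw [hcs, image_toNR_basis]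
  have hgens_t : Ft.coneGens σt = ⇑c '' s := coneGens_of_basis Ft σt hσt c s hcs
  -- integer coordinates
  set m : Fin 3 → ℤ := fun i => c.repr (x₁ + x₂ + x₃) i with hm_def
  have hmz : ∀ i, BC.repr z i = (m i : ℝ) := fun i => by
    rw [hz_def, hBC, realBasis_repr]
  have hm0 : ∀ i, i ∉ s → m i = 0 := by
    intro i hi
    have h := ((mem_coneOf_basis s z).1 (by rw [← hσtB]; exact hzσt)).2 i hi
    rw [hmz] at h
    exact_mod_cast h
  have hm1 : ∀ i ∈ s, 1 ≤ m i := by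
    intro i hi
    have hrel' := hrel
    rw [hσtB] at hrel'
    have h := repr_pos_of_intrinsicInterior BC s hrel' i hi
    rw [hmz] at h
    have : (0:ℤ) < m i := by exact_mod_cast h
    omega
  set a : Fin 3 → Fin 3 → ℤ := fun i j => X.repr (c i) j with ha_def
  have hcmemt : ∀ i ∈ s, toNR (c i) ∈ σt := by
    intro i hi
    rw [hσtB]
    exact mem_coneOf_of_mem ⟨i, hi, realBasis_apply c i⟩
  have ha0 : ∀ i ∈ s, ∀ j, 0 ≤ a i j := by
    intro i hi j
    have hmem : toNR (c i) ∈ coneOf (⇑BX '' Set.univ) := by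
      rw [← hσXB]; exact hσtσ (hcmemt i hi)
    have h := ((mem_coneOf_basis _ _).1 hmem).1 j
    rw [hBX, realBasis_repr] at h
    exact_mod_cast h
  have hkey : ∀ j, ∑ i, m i * a i j = 1 := by
    intro j
    have hdecomp : x₁ + x₂ + x₃ = ∑ i, m i • c i := (c.sum_repr _).symm
    have h1 : X.repr (∑ i, m i • c i) j = ∑ i, m i * a i j := by
      rw [map_sum, Finsupp.finset_sum_apply]
      exact Finset.sum_congr rfl fun i _ => by
        rw [map_smul, Finsupp.smul_apply, smul_eq_mul]
    rw [← hdecomp, hXsum j] at h1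
    exact h1.symm
  have hanz : ∀ i ∈ s, ∃ j, a i j ≠ 0 := by
    intro i hi
    by_contra hcon
    push_neg at hcon
    apply c.ne_zero i
    have hci : c i = ∑ j, a i j • X j := (X.sum_repr (c i)).symm
    rw [hci]
    exact Finset.sum_eq_zero fun j _ => by rw [hcon j, zero_smul]
  have hgex : ∀ j, ∃ i, i ∈ s ∧ m i = 1 ∧ a i j = 1 ∧
      ∀ i' ∈ s, i' ≠ i → a i' j = 0 := by
    intro j
    have hnn : ∀ i ∈ Finset.univ, 0 ≤ m i * a i j := by
      intro i _
      by_cases hi : i ∈ s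
      · exact mul_nonneg (by linarith [hm1 i hi]) (ha0 i hi j)
      · rw [hm0 i hi, zero_mul]
    obtain ⟨i, -, hine⟩ := Finset.exists_ne_zero_of_sum_ne_zero
      (by rw [hkey j]; norm_num : ∑ i, m i * a i j ≠ 0)
    have his : i ∈ s := by
      by_contra h
      exact hine (by rw [hm0 i h, zero_mul])
    have hai : 1 ≤ a i j := by
      rcases (ha0 i his j).lt_or_eq with h | h
      · omega
      · exact absurd (by rw [← h, mul_zero]) hine
    have hmi := hm1 i his
    have hterm1 : 1 ≤ m i * a i j := by nlinarith
    have htot := hkey j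
    have hsplit := Finset.add_sum_erase Finset.univ (fun i' => m i' * a i' j)
      (Finset.mem_univ i)
    have hrestnn : 0 ≤ ∑ i' ∈ Finset.univ.erase i, m i' * a i' j :=
      Finset.sum_nonneg fun i' hi' => hnn i' (Finset.mem_univ i')
    have hrest0 : ∀ i' ∈ Finset.univ.erase i, m i' * a i' j = 0 := by
      refine (Finset.sum_eq_zero_iff_of_nonneg
        (fun i' hi' => hnn i' (Finset.mem_univ i'))).1 ?_
      omega
    have hterm_eq : m i * a i j = 1 := by
      have hrsum : ∑ i' ∈ Finset.univ.erase i, m i' * a i' j = 0 :=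
        Finset.sum_eq_zero hrest0
      omega
    have hmeq : m i = 1 := by nlinarith
    have haeq : a i j = 1 := by nlinarith
    refine ⟨i, his, hmeq, haeq, fun i' hi's hne => ?_⟩
    have h0 := hrest0 i' (Finset.mem_erase.2 ⟨hne, Finset.mem_univ i'⟩)
    have := hm1 i' hi's
    rcases mul_eq_zero.1 h0 with h | h
    · omega
    · exact h
  choose g hgs hgm hga hgz using hgex
  have hsg : ∀ i ∈ s, ∃ j, g j = i := by
    intro i hi
    obtain ⟨j, hj⟩ := hanz i hi
    by_contra hcon
    push_neg at hcon
    exact hj (hgz j i hi (Ne.symm (hcon j)))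
  have hsset : s = {g 0, g 1, g 2} := by
    ext i
    simp only [Set.mem_insert_iff, Set.mem_singleton_iff]
    constructor
    · intro hi
      obtain ⟨j, hj⟩ := hsg i hi
      fin_cases j
      · exact Or.inl hj.symm
      · exact Or.inr (Or.inl hj.symm)
      · exact Or.inr (Or.inr hj.symm)
    · rintro (rfl | rfl | rfl)
      exacts [hgs 0, hgs 1, hgs 2]
  have hcdecomp : ∀ i, c i = a i 0 • X 0 + a i 1 • X 1 + a i 2 • X 2 := by
    intro i
    have h := (X.sum_repr (c i)).symm
    rw [Fin.sum_univ_three] at h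
    exact h
  have hdim : coneDim σt = s.ncard := by rw [hσtB, coneDim_coneOf_basis]
  -- basic disequalities
  have hx1z : x₁ ≠ 0 := by rw [← hX1]; exact X.ne_zero 0
  have hx2z : x₂ ≠ 0 := by rw [← hX2]; exact X.ne_zero 1
  have hx3z : x₃ ≠ 0 := by rw [← hX3]; exact X.ne_zero 2
  have hp12 : x₁ + x₂ ≠ 0 := by
    intro h
    have h0 : X.repr (x₁ + x₂) 0 = 1 := by
      rw [← hX1, ← hX2, map_add, X.repr_self, X.repr_self]
      simp [Finsupp.single_apply]
    rw [h] at h0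
    simp at h0
  have hp13 : x₁ + x₃ ≠ 0 := by
    intro h
    have h0 : X.repr (x₁ + x₃) 0 = 1 := by
      rw [← hX1, ← hX3, map_add, X.repr_self, X.repr_self]
      simp [Finsupp.single_apply]
    rw [h] at h0
    simp at h0
  have hp23 : x₂ + x₃ ≠ 0 := by
    intro h
    have h0 : X.repr (x₂ + x₃) 1 = 1 := by
      rw [← hX2, ← hX3, map_add, X.repr_self, X.repr_self]
      simp [Finsupp.single_apply]
    rw [h] at h0
    simp at h0
  -- the master classification
  have hmaster : (coneDim σt = 3 ∧ σt = σ ∧ Ft.coneGens σt = {x₁, x₂, x₃}) ∨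
      (coneDim σt = 2 ∧ (Ft.coneGens σt = {x₁ + x₂, x₃} ∨
        Ft.coneGens σt = {x₁ + x₃, x₂} ∨ Ft.coneGens σt = {x₂ + x₃, x₁})) ∨
      (coneDim σt = 1 ∧ Ft.coneGens σt = {x₁ + x₂ + x₃}) := by
    by_cases h01 : g 0 = g 1
    · by_cases h02 : g 0 = g 2
      · -- all equal : dimension 1
        right; right
        have hss : s = {g 0} := by
          rw [hsset, ← h01, ← h02]
          simp
        have hc0 : c (g 0) = x₁ + x₂ + x₃ := by
          have e1 : a (g 0) 1 = 1 := by rw [h01]; exact hga 1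
          have e2 : a (g 0) 2 = 1 := by rw [h02]; exact hga 2
          rw [hcdecomp (g 0), hga 0, e1, e2, hX1, hX2, hX3]
          simp
        constructor
        · rw [hdim, hss, Set.ncard_singleton]
        · rw [hgens_t, hss, Set.image_singleton, hc0]
      · -- g0 = g1 ≠ g2 : dimension 2, gens {x₁+x₂, x₃}
        right; left
        have hss : s = {g 0, g 2} := by
          rw [hsset, ← h01]
          simp
        have hc0 : c (g 0) = x₁ + x₂ := by
          have e1 : a (g 0) 1 = 1 := by rw [h01]; exact hga 1
          rw [hcdecomp (g 0), hga 0, e1,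
            hgz 2 (g 0) (hgs 0) h02, hX1, hX2]
          simp
        have hc2 : c (g 2) = x₃ := by
          rw [hcdecomp (g 2), hga 2, hgz 0 (g 2) (hgs 2) (Ne.symm h02),
            hgz 1 (g 2) (hgs 2) (by rw [← h01]; exact Ne.symm h02), hX3]
          simp
        constructor
        · rw [hdim, hss, Set.ncard_pair h02]
        · left
          rw [hgens_t, hss, Set.image_insert_eq, Set.image_singleton, hc0, hc2]
    · by_cases h02 : g 0 = g 2
      · -- g0 = g2 ≠ g1 : dimension 2, gens {x₁+x₃, x₂}
        right; left
        have hss : s = {g 0, g 1} := by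
          rw [hsset, ← h02]
          ext i
          simp only [Set.mem_insert_iff, Set.mem_singleton_iff]
          tauto
        have hc0 : c (g 0) = x₁ + x₃ := by
          have e2 : a (g 0) 2 = 1 := by rw [h02]; exact hga 2
          rw [hcdecomp (g 0), hga 0, hgz 1 (g 0) (hgs 0) h01,
            e2, hX1, hX3]
          simp
        have hc1 : c (g 1) = x₂ := by
          rw [hcdecomp (g 1), hga 1, hgz 0 (g 1) (hgs 1) (Ne.symm h01),
            hgz 2 (g 1) (hgs 1) (by rw [← h02]; exact Ne.symm h01), hX2]
          simp
        constructor
        · rw [hdim, hss, Set.ncard_pair h01]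
        · right; left
          rw [hgens_t, hss, Set.image_insert_eq, Set.image_singleton, hc0, hc1]
      · by_cases h12' : g 1 = g 2
        · -- g1 = g2 ≠ g0 : dimension 2, gens {x₂+x₃, x₁}
          right; left
          have hss : s = {g 0, g 1} := by
            rw [hsset, ← h12']
            simp
          have hc0 : c (g 0) = x₁ := by
            rw [hcdecomp (g 0), hga 0, hgz 1 (g 0) (hgs 0) h01,
              hgz 2 (g 0) (hgs 0) h02, hX1]
            simp
          have hc1 : c (g 1) = x₂ + x₃ := by
            have e2 : a (g 1) 2 = 1 := by rw [h12']; exact hga 2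
            rw [hcdecomp (g 1), hga 1, hgz 0 (g 1) (hgs 1) (Ne.symm h01),
              e2, hX2, hX3]
            simp
          constructor
          · rw [hdim, hss, Set.ncard_pair h01]
          · right; right
            rw [hgens_t, hss, Set.image_insert_eq, Set.image_singleton, hc0, hc1]
            rw [Set.pair_comm]
        · -- all distinct : dimension 3, σt = σ
          left
          have hc0 : c (g 0) = x₁ := by
            rw [hcdecomp (g 0), hga 0, hgz 1 (g 0) (hgs 0) h01,
              hgz 2 (g 0) (hgs 0) h02, hX1]
            simp
          have hc1 : c (g 1) = x₂ := by
            rw [hcdecomp (g 1), hga 1, hgz 0 (g 1) (hgs 1) (Ne.symm h01),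
              hgz 2 (g 1) (hgs 1) h12', hX2]
            simp
          have hc2 : c (g 2) = x₃ := by
            rw [hcdecomp (g 2), hga 2, hgz 0 (g 2) (hgs 2) (Ne.symm h02),
              hgz 1 (g 2) (hgs 2) (Ne.symm h12'), hX3]
            simp
          have himg : ⇑c '' s = {x₁, x₂, x₃} := by
            rw [hsset, Set.image_insert_eq, Set.image_insert_eq,
              Set.image_singleton, hc0, hc1, hc2]
          refine ⟨?_, ?_, ?_⟩
          · rw [hdim, hsset, Set.ncard_eq_three.2 ⟨g 0, g 1, g 2, h01, h02, h12', rfl⟩]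
          · rw [hcs, himg, hσX]
          · rw [hgens_t, himg]
  -- conclude
  refine ⟨⟨?_, ?_⟩, ⟨?_, ?_⟩, ⟨?_, ?_⟩⟩
  · intro hd
    rcases hmaster with ⟨-, h, -⟩ | ⟨h2, -⟩ | ⟨h1, -⟩
    · exact h
    · omega
    · omega
  · intro h
    rw [h]
    exact hσ3
  · intro hd
    rcases hmaster with ⟨h3, -, -⟩ | ⟨-, h⟩ | ⟨h1, -⟩
    · omega
    · exact h
    · omega
  · intro h
    rcases hmaster with ⟨-, -, hg3⟩ | ⟨h2, -⟩ | ⟨-, hg1⟩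
    · exfalso
      rcases h with h | h | h
      · have hx1mem : x₁ ∈ ({x₁ + x₂, x₃} : Set (Fin 3 → ℤ)) := by
          rw [← h, hg3]; left; rfl
        rcases hx1mem with h' | h'
        · exact hx2z (by rwa [left_eq_add] at h')
        · exact h13 h'
      · have hx1mem : x₁ ∈ ({x₁ + x₃, x₂} : Set (Fin 3 → ℤ)) := by
          rw [← h, hg3]; left; rfl
        rcases hx1mem with h' | h'
        · exact hx3z (by rwa [left_eq_add] at h')
        · exact h12 h'
      · have hx2mem : x₂ ∈ ({x₂ + x₃, x₁} : Set (Fin 3 → ℤ)) := by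
          rw [← h, hg3]; right; left; rfl
        rcases hx2mem with h' | h'
        · exact hx3z (by rwa [left_eq_add] at h')
        · exact h12 h'.symm
    · exact h2
    · exfalso
      rcases h with h | h | h
      · have hmem : x₁ + x₂ ∈ ({x₁ + x₂ + x₃} : Set (Fin 3 → ℤ)) := by
          rw [← hg1, h]; left; rfl
        rw [Set.mem_singleton_iff, left_eq_add] at hmem
        exact hx3z hmem
      · have hmem : x₁ + x₃ ∈ ({x₁ + x₂ + x₃} : Set (Fin 3 → ℤ)) := by
          rw [← hg1, h]; left; rfl
        rw [Set.mem_singleton_iff] at hmem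
        exact hx2z (by linear_combination -hmem)
      · have hmem : x₂ + x₃ ∈ ({x₁ + x₂ + x₃} : Set (Fin 3 → ℤ)) := by
          rw [← hg1, h]; left; rfl
        rw [Set.mem_singleton_iff] at hmem
        exact hx1z (by linear_combination -hmem)
  · intro hd
    rcases hmaster with ⟨h3, -, -⟩ | ⟨h2, -⟩ | ⟨-, h⟩
    · omega
    · omega
    · exact h
  · intro h
    rcases hmaster with ⟨-, -, hg3⟩ | ⟨h2, hg⟩ | ⟨h1, -⟩
    · exfalso
      have h1m : x₁ = x₁ + x₂ + x₃ := by
        have : x₁ ∈ ({x₁ + x₂ + x₃} : Set (Fin 3 → ℤ)) := by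
          rw [← h, hg3]; left; rfl
        exact this
      have h2m : x₂ = x₁ + x₂ + x₃ := by
        have : x₂ ∈ ({x₁ + x₂ + x₃} : Set (Fin 3 → ℤ)) := by
          rw [← h, hg3]; right; left; rfl
        exact this
      exact h12 (h1m.trans h2m.symm)
    · exfalso
      rcases hg with hg | hg | hg
      · have hmem : x₃ ∈ ({x₁ + x₂ + x₃} : Set (Fin 3 → ℤ)) := by
          rw [← h, hg]; right; rfl
        rw [Set.mem_singleton_iff] at hmem
        exact hp12 (by linear_combination -hmem)
      · have hmem : x₂ ∈ ({x₁ + x₂ + x₃} : Set (Fin 3 → ℤ)) := by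
          rw [← h, hg]; right; rfl
        rw [Set.mem_singleton_iff] at hmem
        exact hp13 (by linear_combination -hmem)
      · have hmem : x₁ ∈ ({x₁ + x₂ + x₃} : Set (Fin 3 → ℤ)) := by
          rw [← h, hg]; right; rfl
        rw [Set.mem_singleton_iff] at hmem
        exact hp23 (by linear_combination -hmem)
    · exact h1
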